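/- Let s ≥ 1 and let M be the free product (coproduct) of monoids of the free monoid on one generator a and the cyclic group of order s with generator z (so M = ⟨a, z | z^s = 1⟩). Then the elements a z^i a for i ∈ ℤ/sℤ are free in M: the monoid homomorphism from the free monoid on the alphabet ℤ/sℤ to M sending the letter i to a z^i a is injective. In particular, the submonoid of M generated by {a z^i a : i ∈ ℤ/sℤ} is a free monoid on these s generators. -/

import Mathlib

/-- The monoid `M = ⟨a, z ∣ z^s = 1⟩`: the free product (coproduct) of the free
monoid on one generator and the cyclic group of order `s`. -/
def FreeCyclicCoprod (s : ℕ) : Type :=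
  Monoid.Coprod (FreeMonoid Unit) (Multiplicative (ZMod s))

instance (s : ℕ) : Monoid (FreeCyclicCoprod s) :=
  inferInstanceAs (Monoid (Monoid.Coprod (FreeMonoid Unit) (Multiplicative (ZMod s))))

/-- The generator `a` of `M = ⟨a, z ∣ z^s = 1⟩`. -/
def genA (s : ℕ) : FreeCyclicCoprod s :=
  Monoid.Coprod.inl (FreeMonoid.of ())

/-- The element `z^i` of `M = ⟨a, z ∣ z^s = 1⟩`, for `i ∈ ℤ/sℤ`. -/
def genZpow (s : ℕ) (i : ZMod s) : FreeCyclicCoprod s :=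
  Monoid.Coprod.inr (Multiplicative.ofAdd i)

/-- State space for a parsing action of `M`: a completed list of exponents,
together with an optional "currently open block" exponent. -/
abbrev ParseState (s : ℕ) := List (ZMod s) × Option (ZMod s)

/-- Action of the generator `a` on parse states. -/
def actA (s : ℕ) : Function.End (ParseState s) := fun p =>
  match p.2 with
  | none => (p.1, some 0)
  | some j => (p.1 ++ [j], none)

/-- Action of `z^i` on parse states, as a monoid hom. -/
def actZ (s : ℕ) : Multiplicative (ZMod s) →* Function.End (ParseState s) where
  toFun i := fun p => (p.1, p.2.map (fun j => j + Multiplicative.toAdd i))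
  map_one' := by
    funext p
    obtain ⟨L, o⟩ := p
    cases o <;> simp [Function.End.one_def]
  map_mul' i k := by
    funext p
    obtain ⟨L, o⟩ := p
    cases o with
    | none => rfl
    | some j =>
      show (L, some _) = (L, some _)
      rw [toAdd_mul]
      ring_nf

/-- The parsing representation `Φ : M → End(ParseState)`. -/
def parseHom (s : ℕ) : FreeCyclicCoprod s →* Function.End (ParseState s) :=
  Monoid.Coprod.lift (FreeMonoid.lift fun _ => actA s) (actZ s)

lemma parseHom_genA (s : ℕ) : parseHom s (genA s) = actA s := by
  exact (Monoid.Coprod.lift_apply_inl _ _ _).trans (FreeMonoid.lift_eval_of _ _)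

lemma parseHom_genZpow (s : ℕ) (i : ZMod s) :
    parseHom s (genZpow s i) = actZ s (Multiplicative.ofAdd i) := by
  exact Monoid.Coprod.lift_apply_inr _ _ _

lemma parse_block (s : ℕ) (i : ZMod s) (L : List (ZMod s)) :
    parseHom s (genA s * genZpow s i * genA s) (L, none) = (L ++ [i], none) := by
  have : parseHom s (genA s * genZpow s i * genA s)
      = actA s * actZ s (Multiplicative.ofAdd i) * actA s := by
    rw [map_mul, map_mul, parseHom_genA, parseHom_genZpow]
  rw [this]
  show actA s (actZ s (Multiplicative.ofAdd i) (actA s (L, none))) = _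
  show actA s ((L, some (0 + Multiplicative.toAdd (Multiplicative.ofAdd i))) : ParseState s) = _
  simp [actA]

lemma parse_word (s : ℕ) (w : FreeMonoid (ZMod s)) (L : List (ZMod s)) :
    parseHom s (FreeMonoid.lift (fun i : ZMod s => genA s * genZpow s i * genA s) w)
      (L, none) = (L ++ (FreeMonoid.toList w).reverse, none) := by
  induction w using FreeMonoid.recOn generalizing L with
  | one =>
    rw [map_one, map_one]
    simp [Function.End.one_def]
  | of_mul x xs ih =>
    rw [map_mul, map_mul, FreeMonoid.lift_eval_of, Function.End.mul_def]
    erw [Function.comp_apply, ih, parse_block]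
    simp

theorem azia_free_in_coprod (s : ℕ) (hs : 1 ≤ s) :
    Function.Injective
      (FreeMonoid.lift fun i : ZMod s => genA s * genZpow s i * genA s) ∧
    MonoidHom.mrange
        (FreeMonoid.lift fun i : ZMod s => genA s * genZpow s i * genA s) =
      Submonoid.closure {x : FreeCyclicCoprod s |
        ∃ i : ZMod s, x = genA s * genZpow s i * genA s} := by
  constructor
  · intro w1 w2 h
    have h2 := congrArg (fun m => parseHom s m (([] : List (ZMod s)), none)) h
    simp only [parse_word, List.nil_append] at h2
    have : (FreeMonoid.toList w1).reverse = (FreeMonoid.toList w2).reverse :=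
      congrArg Prod.fst h2
    have := List.reverse_injective this
    exact FreeMonoid.toList.injective this
  · apply le_antisymm
    · rintro x ⟨w, rfl⟩
      induction w using FreeMonoid.recOn with
      | one => exact Submonoid.one_mem _
      | of_mul y ys ih =>
        rw [map_mul]
        exact Submonoid.mul_mem _
          (Submonoid.subset_closure (by simp [FreeMonoid.lift_eval_of]; exact ⟨y, rfl⟩))
          ih
    · rw [Submonoid.closure_le]
      rintro x ⟨i, rfl⟩
      exact ⟨FreeMonoid.of i, by simp [FreeMonoid.lift_eval_of]⟩
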